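/- arXiv:1502.01793 — 3 statements merged into one kernel-verified Lean document; each statement's English description precedes it below -/
import Mathlib

section
/- Let β be a Pisot number, N a positive integer, M a finite subset of (1/N)·ℤ[β], and K > 0. Then the set of all values C⁽ⁿ⁾ attained by all sequences (C⁽ⁿ⁾)_{n≥0} satisfying C⁽⁰⁾ ∈ M, C⁽ⁿ⁺¹⁾ = β·C⁽ⁿ⁾ + mₙ for some mₙ ∈ M, and |C⁽ⁿ⁾| ≤ K for all n, is a finite set. -/
open MeasureTheory Set Filter

noncomputable section

/-- The lattice `L = ℤη₁ + ℤη₂`. -/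
def lat (η₁ η₂ : ℂ) : Set ℂ := {d : ℂ | ∃ m n : ℤ, d = (m : ℂ) * η₁ + (n : ℂ) * η₂}

/-- The fundamental domain `X = {ξ + xη₁ + yη₂ : x, y ∈ [0,1)}`. -/
def fund (ξ η₁ η₂ : ℂ) : Set ℂ :=
  {z : ℂ | ∃ x y : ℝ, x ∈ Set.Ico (0:ℝ) 1 ∧ y ∈ Set.Ico (0:ℝ) 1 ∧
    z = ξ + (x : ℂ) * η₁ + (y : ℂ) * η₂}

/-- Covering radius of the lattice: infimum of `R > 0` such that every point of `ℂ`
is within distance `R` of a lattice point. -/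
def covRad (η₁ η₂ : ℂ) : ℝ :=
  sInf {R : ℝ | 0 < R ∧ ∀ z : ℂ, ∃ d ∈ lat η₁ η₂, dist z d ≤ R}

/-- The constant ν₁(θ). -/
def nu1 (θ : ℝ) : ℝ :=
  if 1 / 2 < Real.tan (θ / 2) ∧ Real.tan (θ / 2) < 2 then 2
  else (1 + |Real.cos θ|) / (2 * (Real.sin θ + |Real.cos θ| - 1))

/-- The constant ν₂(θ). -/
def nu2 (θ : ℝ) : ℝ :=
  1 + Real.sqrt 2 / (Real.sin θ * Real.sqrt (1 + |Real.cos θ|))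

/-- The width `w(X) = min{|η₁|, |η₂|}·sin θ`. -/
def width (θ : ℝ) (η₁ η₂ : ℂ) : ℝ :=
  min ‖η₁‖ ‖η₂‖ * Real.sin θ

/-- An ACIM of `T` on `X`: a Borel probability measure concentrated on `X`,
`T`-invariant, and absolutely continuous w.r.t. 2-dimensional Lebesgue measure. -/
def IsACIM (X : Set ℂ) (T : ℂ → ℂ) (μ : Measure ℂ) : Prop :=
  IsProbabilityMeasure μ ∧ μ Xᶜ = 0 ∧
    (∀ A : Set ℂ, MeasurableSet A → μ (T ⁻¹' A) = μ A) ∧ μ ≪ volume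

/-- `S` is a finite union of (line) segments. -/
def IsFUS (S : Set ℂ) : Prop :=
  ∃ F : Finset (ℂ × ℂ), S = ⋃ p ∈ F, segment ℝ p.1 p.2

/-- A Pisot number: a real algebraic integer `β > 1` all of whose other conjugates
have absolute value strictly less than 1. -/
def IsPisot (β : ℝ) : Prop :=
  1 < β ∧ IsIntegral ℤ β ∧
    ∀ z : ℂ, Polynomial.aeval z (minpoly ℤ β) = 0 → z ≠ (β : ℂ) → ‖z‖ < 1

/-- `B₋ₜ(A)`: the points of `A` at distance at least `t` from the boundary of `A`. -/
def innerPart (t : ℝ) (A : Set ℂ) : Set ℂ := {x ∈ A | t ≤ Metric.infDist x (frontier A)}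

/-- `S` is a `t`-covering of `A`: every point of `A` is within distance `t` of `S`. -/
def IsCovering (t : ℝ) (S A : Set ℂ) : Prop := ∀ x ∈ A, ∃ s ∈ S, dist x s ≤ t

/-- `Y = X ∖ ⋃_{n ∈ ℤ} Tⁿ(∂X)`: removal of all forward images and preimages
of the boundary. -/
def Yset (X : Set ℂ) (T : ℂ → ℂ) : Set ℂ :=
  X \ ((⋃ n : ℕ, T^[n] '' frontier X) ∪ (⋃ n : ℕ, {z ∈ X | T^[n] z ∈ frontier X}))


set_option maxHeartbeats 1000000 in
open IntermediateField in
private theorem statement11'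
    (β : ℝ) (hβ1 : (1:ℝ) < β) (hβ2 : IsIntegral ℤ β)
    (hβ3 : ∀ z : ℂ, Polynomial.aeval z (minpoly ℤ β) = 0 → z ≠ (β : ℂ) → ‖z‖ < 1)
    (N : ℕ) (hN : 0 < N)
    (M : Set ℝ) (hMfin : M.Finite)
    (hM : M ⊆ {x : ℝ | ∃ y ∈ Algebra.adjoin ℤ ({β} : Set ℝ), x = y / (N : ℝ)})
    (K : ℝ) (hK : 0 < K) :
    Set.Finite {c : ℝ | ∃ C : ℕ → ℝ, C 0 ∈ M ∧
      (∀ n : ℕ, ∃ m ∈ M, C (n + 1) = β * C n + m) ∧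
      (∀ n : ℕ, |C n| ≤ K) ∧ ∃ n : ℕ, C n = c} := by
  classical
  rcases M.eq_empty_or_nonempty with rfl | hMne
  · convert Set.finite_empty
    ext c; simp only [Set.mem_setOf_eq, Set.mem_empty_iff_false, iff_false]
    rintro ⟨C, h0, -⟩; exact h0
  have hβQ : IsIntegral ℚ β := hβ2.tower_top
  set F : IntermediateField ℚ ℝ := ℚ⟮β⟯ with hF
  haveI : FiniteDimensional ℚ F := IntermediateField.adjoin.finiteDimensional hβQ
  haveI : NumberField F := ⟨⟩
  have hNR : (N : ℝ) ≠ 0 := Nat.cast_ne_zero.mpr hN.ne'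
  have hβmem : β ∈ Algebra.adjoin ℤ ({β} : Set ℝ) := Algebra.subset_adjoin rfl
  -- membership of the ℤ-algebra adjoin in F
  have hsub : ∀ r : ℝ, r ∈ Algebra.adjoin ℤ ({β} : Set ℝ) → r ∈ F := by
    intro r hr
    refine Algebra.adjoin_induction (p := fun x _ => x ∈ F) ?_ ?_ ?_ ?_ hr
    · rintro x hx; rw [Set.mem_singleton_iff] at hx; rw [hx]
      exact IntermediateField.mem_adjoin_simple_self ℚ β
    · intro n; simpa using intCast_mem F n
    · intro a b _ _ ha hb; exact add_mem ha hb
    · intro a b _ _ ha hb; exact mul_mem ha hb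
  -- integrality
  have hint : ∀ r : ℝ, r ∈ Algebra.adjoin ℤ ({β} : Set ℝ) → IsIntegral ℤ r := by
    intro r hr
    refine Algebra.adjoin_induction (p := fun x _ => IsIntegral ℤ x) ?_ ?_ ?_ ?_ hr
    · rintro x hx; rw [Set.mem_singleton_iff] at hx; rw [hx]; exact hβ2
    · intro n; exact isIntegral_algebraMap
    · intro a b _ _ ha hb; exact ha.add hb
    · intro a b _ _ ha hb; exact ha.mul hb
  have hMR : ∀ x ∈ M, (N : ℝ) * x ∈ Algebra.adjoin ℤ ({β} : Set ℝ) := by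
    intro x hx
    obtain ⟨y, hy, rfl⟩ := hM hx
    have : (N : ℝ) * (y / N) = y := by field_simp
    rw [this]; exact hy
  -- lift to F
  set L : ℝ → F := fun r => if h : r ∈ F then ⟨r, h⟩ else 0 with hLdef
  have hL : ∀ (r : ℝ) (h : r ∈ F), (L r : ℝ) = r := by
    intro r h; simp only [hLdef, dif_pos h]
  set βF : F := IntermediateField.AdjoinSimple.gen ℚ β with hβFdef
  have hβF : (βF : ℝ) = β := rfl
  have hinj : Function.Injective (algebraMap F ℝ) := (algebraMap (↥F) ℝ).injective
  -- roots of minpoly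
  have hroot : ∀ φ : F →+* ℂ, Polynomial.aeval (φ βF) (minpoly ℤ β) = 0 := by
    intro φ
    have h1 : minpoly ℤ β = minpoly ℤ βF := by
      have := minpoly.algebraMap_eq (A := ℤ) hinj βF
      rwa [show algebraMap F ℝ βF = β from rfl] at this
    rw [h1]
    exact (Polynomial.aeval_algHom_apply φ.toIntAlgHom βF _).trans
      (by rw [minpoly.aeval]; exact map_zero φ)
  -- embeddings fixing β are the canonical inclusion
  have hiota : ∀ φ : F →+* ℂ, φ βF = (β : ℂ) → ∀ x : F, φ x = ((x : ℝ) : ℂ) := by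
    intro φ hφ x
    set ψ : F →+* ℂ := Complex.ofRealHom.comp (algebraMap F ℝ) with hψdef
    have hgen : φ.toRatAlgHom ((IntermediateField.adjoin.powerBasis hβQ).gen)
        = ψ.toRatAlgHom ((IntermediateField.adjoin.powerBasis hβQ).gen) := by
      rw [IntermediateField.adjoin.powerBasis_gen]
      show φ βF = ψ βF
      rw [hφ]; rfl
    have := (IntermediateField.adjoin.powerBasis hβQ).algHom_ext hgen
    exact DFunLike.congr_fun (congrArg AlgHom.toRingHom this) x
  -- the bounds
  set Mf : Finset ℝ := hMfin.toFinset with hMfdef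
  have hMfne : Mf.Nonempty := by rwa [hMfdef, Set.Finite.toFinset_nonempty]
  set Bm : (F →+* ℂ) → ℝ := fun φ => Mf.sup' hMfne (fun x => ‖φ (L ((N : ℝ) * x))‖) with hBmdef
  have hBm : ∀ (φ : F →+* ℂ), ∀ x ∈ M, ‖φ (L ((N : ℝ) * x))‖ ≤ Bm φ := by
    intro φ x hx
    have hxM : x ∈ Mf := by rw [hMfdef]; exact hMfin.mem_toFinset.mpr hx
    exact Finset.le_sup' (fun y => ‖φ (L ((N : ℝ) * y))‖) hxM
  have hBm0 : ∀ φ : F →+* ℂ, 0 ≤ Bm φ := by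
    intro φ
    obtain ⟨x, hx⟩ := hMne
    exact (norm_nonneg _).trans (hBm φ x hx)
  set A : (F →+* ℂ) → ℝ := fun φ =>
    if φ βF = (β : ℂ) then (N : ℝ) * K else Bm φ / (1 - ‖φ βF‖) with hAdef
  set B : ℝ := ⨆ φ : F →+* ℂ, A φ with hBdef
  have hAB : ∀ φ : F →+* ℂ, A φ ≤ B :=
    fun φ => le_ciSup (Set.Finite.bddAbove (Set.finite_range A)) φ
  -- main inclusion
  refine Set.Finite.subset
    ((NumberField.Embeddings.finite_of_norm_le F ℂ B).image (fun x : F => (x : ℝ) / N)) ?_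
  rintro c ⟨C, hC0, hrec, hbd, n, rfl⟩
  choose m hm hmeq using hrec
  have hCR : ∀ k, (N : ℝ) * C k ∈ Algebra.adjoin ℤ ({β} : Set ℝ) := by
    intro k
    induction k with
    | zero => exact hMR _ hC0
    | succ k ih =>
      have h : (N : ℝ) * C (k + 1) = β * ((N : ℝ) * C k) + (N : ℝ) * m k := by
        rw [hmeq k]; ring
      rw [h]
      exact add_mem (mul_mem hβmem ih) (hMR _ (hm k))
  set D : ℕ → F := fun k => L ((N : ℝ) * C k) with hDdef
  have hD : ∀ k, (D k : ℝ) = (N : ℝ) * C k := fun k => hL _ (hsub _ (hCR k))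
  have hDrec : ∀ k, D (k + 1) = βF * D k + L ((N : ℝ) * m k) := by
    intro k
    apply Subtype.ext
    show (D (k+1) : ℝ) = ((βF * D k + L ((N : ℝ) * m k) : F) : ℝ)
    rw [AddMemClass.coe_add, MulMemClass.coe_mul, hD, hD, hβF,
      hL _ (hsub _ (hMR _ (hm k))), hmeq k]
    ring
  have hDint : ∀ k, IsIntegral ℤ (D k) := by
    intro k
    rw [← isIntegral_algebraMap_iff hinj]
    show IsIntegral ℤ ((D k : ℝ))
    rw [hD]
    exact hint _ (hCR k)
  have hphiD : ∀ (φ : F →+* ℂ) (k : ℕ), ‖φ (D k)‖ ≤ A φ := by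
    intro φ k
    by_cases hφ : φ βF = (β : ℂ)
    · rw [hAdef]; simp only [if_pos hφ]
      rw [hiota φ hφ (D k), hD]
      rw [Complex.norm_real, Real.norm_eq_abs, abs_mul, Nat.abs_cast]
      exact mul_le_mul_of_nonneg_left (hbd k) (Nat.cast_nonneg N)
    · have hρ : ‖φ βF‖ < 1 := by
        have := hβ3 (φ βF) (hroot φ) hφ
        exact this
      have hρ0 : (0:ℝ) ≤ ‖φ βF‖ := norm_nonneg _
      have h1ρ : (0:ℝ) < 1 - ‖φ βF‖ := by linarith
      rw [hAdef]; simp only [if_neg hφ]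
      induction k with
      | zero =>
        have h0 : D 0 = L ((N : ℝ) * C 0) := rfl
        rw [h0]
        refine (hBm φ _ hC0).trans ?_
        rw [le_div_iff₀ h1ρ]
        nlinarith [hBm0 φ]
      | succ k ih =>
        rw [hDrec k, map_add, map_mul]
        calc ‖φ βF * φ (D k) + φ (L ((N : ℝ) * m k))‖
            ≤ ‖φ βF‖ * ‖φ (D k)‖ + ‖φ (L ((N : ℝ) * m k))‖ := by
              refine (norm_add_le _ _).trans ?_
              rw [norm_mul]
          _ ≤ ‖φ βF‖ * (Bm φ / (1 - ‖φ βF‖)) + Bm φ :=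
              add_le_add (mul_le_mul_of_nonneg_left ih hρ0) (hBm φ _ (hm k))
          _ = Bm φ / (1 - ‖φ βF‖) := by
              have hne : (1 : ℝ) - ‖φ βF‖ ≠ 0 := ne_of_gt h1ρ
              field_simp
              ring
  refine ⟨D n, ⟨hDint n, fun φ => (hphiD φ n).trans (hAB φ)⟩, ?_⟩
  show (D n : ℝ) / N = C n
  rw [hD n, mul_comm, mul_div_assoc, div_self hNR, mul_one]

/-- For a Pisot number β, a finite set M ⊆ (1/N)·ℤ[β] and a bound K,
the set of all values attained by bounded sequences C⁽⁰⁾ ∈ M,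
C⁽ⁿ⁺¹⁾ = β·C⁽ⁿ⁾ + mₙ with mₙ ∈ M and |C⁽ⁿ⁾| ≤ K, is finite. -/
theorem statement11
    (β : ℝ) (hβ : IsPisot β) (N : ℕ) (hN : 0 < N)
    (M : Set ℝ) (hMfin : M.Finite)
    (hM : M ⊆ {x : ℝ | ∃ y ∈ Algebra.adjoin ℤ ({β} : Set ℝ), x = y / (N : ℝ)})
    (K : ℝ) (hK : 0 < K) :
    Set.Finite {c : ℝ | ∃ C : ℕ → ℝ, C 0 ∈ M ∧
      (∀ n : ℕ, ∃ m ∈ M, C (n + 1) = β * C n + m) ∧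
      (∀ n : ℕ, |C n| ≤ K) ∧ ∃ n : ℕ, C n = c} := by
  obtain ⟨hβ1, hβ2, hβ3⟩ := hβ
  exact statement11' β hβ1 hβ2 hβ3 N hN M hMfin hM K hK
end
end

section
/- For every θ ∈ (0, π), ν₁(θ) ≤ ν₂(θ); consequently B₁ ≤ B₂ for every fundamental domain X. -/
open MeasureTheory Set Filter

noncomputable section

lemma nu_aux (s c : ℝ) (hs : 0 < s) (hc : 3/5 ≤ c) (hsc : s ^ 2 = 1 - c ^ 2) :
    (1 + c) / (2 * (s + c - 1)) ≤ 1 + Real.sqrt 2 / (s * Real.sqrt (1 + c)) := by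
  have hc1 : c < 1 := by nlinarith
  have hden : 1 - c < s := by nlinarith [mul_pos hs hs, sq_nonneg (s - 1 + c)]
  have hq0 : 0 < Real.sqrt (1 + c) := Real.sqrt_pos.mpr (by linarith)
  have hqle : Real.sqrt (1 + c) ≤ Real.sqrt 2 := Real.sqrt_le_sqrt (by linarith)
  have h2cs : s ≤ 2 * c := by nlinarith [sq_nonneg (s - 2*c), sq_nonneg (s + 2*c)]
  have h1 : 1 / s ≤ Real.sqrt 2 / (s * Real.sqrt (1 + c)) := by
    rw [div_le_div_iff₀ hs (mul_pos hs hq0)]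
    nlinarith
  have h2 : (1 + c) / (2 * (s + c - 1)) ≤ (s + 1) / s := by
    rw [div_le_div_iff₀ (by linarith) hs]
    nlinarith [mul_nonneg (by linarith : (0:ℝ) ≤ 1 - c) (by linarith : (0:ℝ) ≤ 2*c - s)]
  have h3 : (s + 1) / s = 1 + 1 / s := by field_simp
  linarith [h2.trans_eq h3]

/-- For every θ ∈ (0, π), ν₁(θ) ≤ ν₂(θ); consequently B₁ ≤ B₂ for
every fundamental domain. -/
theorem statement14 (θ : ℝ) (hθ : θ ∈ Set.Ioo 0 Real.pi) :
    nu1 θ ≤ nu2 θ ∧ ∀ c : ℝ, max (nu1 θ) c ≤ max (nu2 θ) c := by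
  obtain ⟨h0, hπ⟩ := hθ
  have hs : 0 < Real.sin θ := Real.sin_pos_of_pos_of_lt_pi h0 hπ
  have hsc : Real.sin θ ^ 2 = 1 - |Real.cos θ| ^ 2 := by
    rw [sq_abs]; nlinarith [Real.sin_sq_add_cos_sq θ]
  have key : nu1 θ ≤ nu2 θ := by
    unfold nu1 nu2
    split_ifs with h
    · have hq0 : 0 < Real.sqrt (1 + |Real.cos θ|) :=
        Real.sqrt_pos.mpr (by positivity)
      have hqle : Real.sqrt (1 + |Real.cos θ|) ≤ Real.sqrt 2 :=
        Real.sqrt_le_sqrt (by nlinarith [Real.abs_cos_le_one θ])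
      have hx : 0 < Real.sin θ * Real.sqrt (1 + |Real.cos θ|) := mul_pos hs hq0
      have hle : Real.sin θ * Real.sqrt (1 + |Real.cos θ|) ≤ Real.sqrt 2 := by
        calc Real.sin θ * Real.sqrt (1 + |Real.cos θ|)
            ≤ 1 * Real.sqrt 2 := by
              apply mul_le_mul (Real.sin_le_one θ) hqle hq0.le one_pos.le
          _ = Real.sqrt 2 := one_mul _
      have := (one_le_div hx).mpr hle
      linarith
    · have hc : 3/5 ≤ |Real.cos θ| := by
        have hco : 0 < Real.cos (θ/2) :=
          Real.cos_pos_of_mem_Ioo ⟨by linarith [Real.pi_pos], by linarith⟩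
        have hsi : 0 < Real.sin (θ/2) :=
          Real.sin_pos_of_pos_of_lt_pi (by linarith) (by linarith [Real.pi_pos])
        have hpy : Real.sin (θ/2) ^ 2 + Real.cos (θ/2) ^ 2 = 1 :=
          Real.sin_sq_add_cos_sq _
        have htan : Real.tan (θ/2) = Real.sin (θ/2) / Real.cos (θ/2) :=
          Real.tan_eq_sin_div_cos _
        have hcos2 : Real.cos θ = 2 * Real.cos (θ/2) ^ 2 - 1 := by
          have := Real.cos_two_mul (θ/2)
          rwa [show 2 * (θ/2) = θ by ring] at this
        rcases not_and_or.mp h with h' | h'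
        · have ht : Real.tan (θ/2) ≤ 1/2 := le_of_not_gt h'
          rw [htan, div_le_div_iff₀ hco two_pos] at ht
          have : (3:ℝ)/5 ≤ Real.cos θ := by nlinarith
          exact le_abs.mpr (Or.inl this)
        · have ht : 2 ≤ Real.tan (θ/2) := le_of_not_gt h'
          rw [htan, le_div_iff₀ hco] at ht
          have : (3:ℝ)/5 ≤ -Real.cos θ := by nlinarith
          exact le_abs.mpr (Or.inr this)
      exact nu_aux _ _ hs hc hsc
  exact ⟨key, fun c => max_le_max key le_rfl⟩
end
end

section
/- Let ζ = i, η₁ = 1, η₂ = βi and ξ = −1 − βi, so that X = {x + yi : x ∈ [−1, 0), y ∈ [−β, 0)}. Then for all x ∈ [−1,0) and y ∈ [−β,0): (i) T(x + yi) = (−βy − ⌊−βy + 1⌋) + βx·i; (ii) T²(x + yi) = f(x) + g(y)·i, where f(x) = −β²x − ⌊−β²x + 1⌋ maps [−1,0) to itself and g(y) = −β²y − β⌊−βy + 1⌋ maps [−β,0) to itself; and (iii) g(βx) = β·f(x) for all x ∈ [−1,0). -/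
open MeasureTheory Set Filter

noncomputable section

lemma mem_fund_iff (β : ℝ) (hβ : 0 < β) (z : ℂ) :
    z ∈ fund (-1 - (β : ℂ) * Complex.I) 1 ((β : ℂ) * Complex.I) ↔
    z.re ∈ Set.Ico (-1 : ℝ) 0 ∧ z.im ∈ Set.Ico (-β) 0 := by
  constructor
  · rintro ⟨x, y, hx, hy, rfl⟩
    simp only [Complex.add_re, Complex.sub_re, Complex.neg_re, Complex.one_re,
      Complex.mul_re, Complex.mul_im, Complex.ofReal_re, Complex.ofReal_im,
      Complex.I_re, Complex.I_im, Complex.add_im, Complex.sub_im, Complex.neg_im,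
      Complex.one_im]
    refine ⟨⟨by linarith [hx.1], by linarith [hx.2]⟩, ?_, ?_⟩ <;>
      nlinarith [hy.1, hy.2]
  · rintro ⟨hre, him⟩
    refine ⟨z.re + 1, z.im / β + 1, ⟨by linarith [hre.1], by linarith [hre.2]⟩,
      ⟨?_, ?_⟩, ?_⟩
    · have h1 : (-1 : ℝ) ≤ z.im / β := by rw [le_div_iff₀ hβ]; linarith [him.1]
      linarith
    · have h2 : z.im / β < 0 := div_neg_of_neg_of_pos him.2 hβ
      linarith
    · apply Complex.ext <;>
        simp only [Complex.add_re, Complex.add_im, Complex.sub_re, Complex.sub_im,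
          Complex.neg_re, Complex.neg_im, Complex.one_re, Complex.one_im,
          Complex.mul_re, Complex.mul_im, Complex.ofReal_re, Complex.ofReal_im,
          Complex.I_re, Complex.I_im] <;> field_simp <;> ring

lemma lat_sub_mem {η₁ η₂ : ℂ} {a b : ℂ} (ha : a ∈ lat η₁ η₂) (hb : b ∈ lat η₁ η₂) :
    a - b ∈ lat η₁ η₂ := by
  obtain ⟨m, n, rfl⟩ := ha
  obtain ⟨m', n', rfl⟩ := hb
  exact ⟨m - m', n - n', by push_cast; ring⟩

lemma fund_unique (β : ℝ) (hβ : 0 < β) {w₁ w₂ : ℂ}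
    (h₁ : w₁.re ∈ Set.Ico (-1 : ℝ) 0 ∧ w₁.im ∈ Set.Ico (-β) 0)
    (h₂ : w₂.re ∈ Set.Ico (-1 : ℝ) 0 ∧ w₂.im ∈ Set.Ico (-β) 0)
    (hd : w₁ - w₂ ∈ lat 1 ((β : ℂ) * Complex.I)) : w₁ = w₂ := by
  obtain ⟨m, n, hmn⟩ := hd
  have hre : w₁.re - w₂.re = (m : ℝ) := by
    have := congrArg Complex.re hmn
    simpa [Complex.mul_re, Complex.mul_im] using this
  have him : w₁.im - w₂.im = (n : ℝ) * β := by
    have := congrArg Complex.im hmn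
    simpa [Complex.mul_re, Complex.mul_im] using this
  have hm : m = 0 := by
    have h1 : (m : ℝ) < 1 := by rw [← hre]; linarith [h₁.1.2, h₂.1.1]
    have h2 : (-1 : ℝ) < m := by rw [← hre]; linarith [h₁.1.1, h₂.1.2]
    have h1' : m < 1 := by exact_mod_cast h1
    have h2' : (-1 : ℤ) < m := by exact_mod_cast h2
    omega
  have hn : n = 0 := by
    have h1 : (n : ℝ) * β < β := by rw [← him]; linarith [h₁.2.2, h₂.2.1]
    have h2 : -β < (n : ℝ) * β := by rw [← him]; linarith [h₁.2.1, h₂.2.2]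
    have h1' : (n : ℝ) < 1 := by nlinarith
    have h2' : (-1 : ℝ) < n := by nlinarith
    have h1'' : n < 1 := by exact_mod_cast h1'
    have h2'' : (-1 : ℤ) < n := by exact_mod_cast h2'
    omega
  subst hm; subst hn
  apply Complex.ext
  · have : w₁.re - w₂.re = 0 := by simpa using hre
    linarith
  · have : w₁.im - w₂.im = 0 := by simpa using him
    linarith

lemma fr_mem (u : ℝ) : (u - (⌊u + 1⌋ : ℝ)) ∈ Set.Ico (-1 : ℝ) 0 := by
  rw [Int.floor_add_one]
  push_cast
  have h1 := Int.fract_nonneg u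
  have h2 := Int.fract_lt_one u
  rw [Int.fract] at h1 h2
  constructor <;> linarith

lemma Tstep (β : ℝ) (hβ : 1 < β) (T : ℂ → ℂ)
    (hT : ∀ z ∈ fund (-1 - (β : ℂ) * Complex.I) 1 ((β : ℂ) * Complex.I),
      T z ∈ fund (-1 - (β : ℂ) * Complex.I) 1 ((β : ℂ) * Complex.I) ∧
      (β : ℂ) * Complex.I * z - T z ∈ lat 1 ((β : ℂ) * Complex.I))
    (x y : ℝ) (hx : x ∈ Set.Ico (-1 : ℝ) 0) (hy : y ∈ Set.Ico (-β) 0) :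
    T ((x : ℂ) + (y : ℂ) * Complex.I) =
      ((-β * y - (⌊-β * y + 1⌋ : ℝ) : ℝ) : ℂ) + ((β * x : ℝ) : ℂ) * Complex.I := by
  have hβ0 : (0 : ℝ) < β := by linarith
  set z : ℂ := (x : ℂ) + (y : ℂ) * Complex.I with hz
  have hzmem : z ∈ fund (-1 - (β : ℂ) * Complex.I) 1 ((β : ℂ) * Complex.I) := by
    rw [mem_fund_iff β hβ0]
    simp [hz, Complex.add_re, Complex.add_im, Complex.mul_re, Complex.mul_im]
    exact ⟨⟨hx.1, hx.2⟩, hy.1, hy.2⟩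
  obtain ⟨hTz, hlat⟩ := hT z hzmem
  set w : ℂ := ((-β * y - (⌊-β * y + 1⌋ : ℝ) : ℝ) : ℂ) + ((β * x : ℝ) : ℂ) * Complex.I
    with hw
  have hwre : w.re = -β * y - (⌊-β * y + 1⌋ : ℝ) := by
    simp [hw, Complex.add_re, Complex.mul_re]
  have hwim : w.im = β * x := by
    simp [hw, Complex.add_im, Complex.mul_im]
  have hwb : w.re ∈ Set.Ico (-1 : ℝ) 0 ∧ w.im ∈ Set.Ico (-β) 0 := by
    rw [hwre, hwim]
    refine ⟨by simpa [neg_mul] using fr_mem (-β * y), ?_, ?_⟩ <;>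
      nlinarith [hx.1, hx.2]
  have hlatw : (β : ℂ) * Complex.I * z - w ∈ lat 1 ((β : ℂ) * Complex.I) := by
    refine ⟨⌊-β * y + 1⌋, 0, ?_⟩
    rw [hz, hw]
    push_cast
    apply Complex.ext <;>
      simp [Complex.add_re, Complex.add_im, Complex.sub_re, Complex.sub_im,
        Complex.mul_re, Complex.mul_im] <;> ring
  have hd : T z - w ∈ lat 1 ((β : ℂ) * Complex.I) := by
    have := lat_sub_mem hlatw hlat
    simpa using this
  exact fund_unique β hβ0 ((mem_fund_iff β hβ0 _).mp hTz) hwb hd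

/-- With ζ = i, η₁ = 1, η₂ = βi, ξ = −1 − βi (so that
X = [−1,0) × [−β,0) in coordinates x + yi): formulas for T, T², the
coordinate maps f and g, and the conjugation g(βx) = βf(x). -/
theorem statement16
    (β : ℝ) (hβ : 1 < β)
    (T : ℂ → ℂ)
    (hT : ∀ z ∈ fund (-1 - (β : ℂ) * Complex.I) 1 ((β : ℂ) * Complex.I),
      T z ∈ fund (-1 - (β : ℂ) * Complex.I) 1 ((β : ℂ) * Complex.I) ∧
      (β : ℂ) * Complex.I * z - T z ∈ lat 1 ((β : ℂ) * Complex.I)) :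
    ∀ x ∈ Set.Ico (-1 : ℝ) 0, ∀ y ∈ Set.Ico (-β) 0,
      (T ((x : ℂ) + (y : ℂ) * Complex.I) =
        ((-β * y - (⌊-β * y + 1⌋ : ℝ) : ℝ) : ℂ) + ((β * x : ℝ) : ℂ) * Complex.I) ∧
      (T (T ((x : ℂ) + (y : ℂ) * Complex.I)) =
        ((-β ^ 2 * x - (⌊-β ^ 2 * x + 1⌋ : ℝ) : ℝ) : ℂ) +
          ((-β ^ 2 * y - β * (⌊-β * y + 1⌋ : ℝ) : ℝ) : ℂ) * Complex.I) ∧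
      (-β ^ 2 * x - (⌊-β ^ 2 * x + 1⌋ : ℝ)) ∈ Set.Ico (-1 : ℝ) 0 ∧
      (-β ^ 2 * y - β * (⌊-β * y + 1⌋ : ℝ)) ∈ Set.Ico (-β) 0 ∧
      (-β ^ 2 * (β * x) - β * (⌊-β * (β * x) + 1⌋ : ℝ)) =
        β * (-β ^ 2 * x - (⌊-β ^ 2 * x + 1⌋ : ℝ)) := by
  intro x hx y hy
  have hβ0 : (0 : ℝ) < β := by linarith
  have h1 := Tstep β hβ T hT x y hx hy
  have hr : (-β * y - (⌊-β * y + 1⌋ : ℝ)) ∈ Set.Ico (-1 : ℝ) 0 := fr_mem (-β * y)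
  have hs : (β * x) ∈ Set.Ico (-β) 0 := ⟨by nlinarith [hx.1], by nlinarith [hx.2]⟩
  have h2 := Tstep β hβ T hT _ _ hr hs
  have e0 : -β * (β * x) = -β ^ 2 * x := by ring
  have e1 : -β * (β * x) - (⌊-β * (β * x) + 1⌋ : ℝ) =
      -β ^ 2 * x - (⌊-β ^ 2 * x + 1⌋ : ℝ) := by rw [e0]
  have e2 : β * (-β * y - (⌊-β * y + 1⌋ : ℝ)) =
      -β ^ 2 * y - β * (⌊-β * y + 1⌋ : ℝ) := by ring
  refine ⟨h1, ?_, fr_mem (-β ^ 2 * x), ?_, ?_⟩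
  · rw [h1, h2, e1, e2]
  · have h3 := fr_mem (-β * y)
    constructor
    · nlinarith [h3.1]
    · nlinarith [h3.2]
  · rw [e0]; ring
end
end
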